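/- Let n and m be positive integers with m even, let Θ be a real antisymmetric invertible n×n matrix, and let J be the real antisymmetric m×m matrix J = [[0, I_{m/2}], [−I_{m/2}, 0]]. Then a pair of real matrices A (n×n) and B (n×m) satisfies the physical realizability equation A·Θ + Θ·Aᵀ + B·J·Bᵀ = 0 if and only if there exist a real symmetric n×n matrix K and a real m×n matrix M such that A = 2·Θ·(K + Mᵀ·J·M) and B = 2·Θ·Mᵀ. -/
import Mathlib


open Matrix

/-- physical realizability (21) ⟺ parameterization (22): with an even
number `m = k + k` of field variables (indexed by `Fin k ⊕ Fin k`),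
`J = [[0, I], [−I, 0]]`, and `Θ` real antisymmetric invertible, a pair `(A, B)`
satisfies `AΘ + ΘAᵀ + BJBᵀ = 0` iff `A = 2Θ(K + MᵀJM)`, `B = 2ΘMᵀ` for some real
symmetric `K` and real `M`. -/
theorem physical_realizability_parameterization {n k : ℕ} (hn : 0 < n) (hk : 0 < k)
    (Θ : Matrix (Fin n) (Fin n) ℝ) (hΘanti : Θᵀ = -Θ) (hΘinv : IsUnit Θ.det)
    (J : Matrix (Fin k ⊕ Fin k) (Fin k ⊕ Fin k) ℝ)
    (hJ : J = Matrix.fromBlocks 0 1 (-1) 0)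
    (A : Matrix (Fin n) (Fin n) ℝ) (B : Matrix (Fin n) (Fin k ⊕ Fin k) ℝ) :
    A * Θ + Θ * Aᵀ + B * J * Bᵀ = 0 ↔
      ∃ (K : Matrix (Fin n) (Fin n) ℝ) (M : Matrix (Fin k ⊕ Fin k) (Fin n) ℝ),
        Kᵀ = K ∧ A = (2 : ℝ) • (Θ * (K + Mᵀ * J * M)) ∧ B = (2 : ℝ) • (Θ * Mᵀ) := by
  have hJt : Jᵀ = -J := by
    subst hJ
    ext (i|i) (j|j) <;> simp [Matrix.fromBlocks, Matrix.one_apply, eq_comm]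
  set T : Matrix (Fin n) (Fin n) ℝ := Θ⁻¹ with hT
  have h1 : Θ * T = 1 := Matrix.mul_nonsing_inv Θ hΘinv
  have h2 : T * Θ = 1 := Matrix.nonsing_inv_mul Θ hΘinv
  have hTt : Tᵀ = -T := by
    have hne : (-Θ) * (-T) = 1 := by rw [neg_mul_neg, h1]
    rw [hT, Matrix.transpose_nonsing_inv, hΘanti, Matrix.inv_eq_right_inv hne]
  constructor
  · intro h
    set Mt : Matrix (Fin n) (Fin k ⊕ Fin k) ℝ := (1/2 : ℝ) • (T * B) with hMt
    refine ⟨(1/2 : ℝ) • (T * A) - Mt * J * Mtᵀ, Mtᵀ, ?_, ?_, ?_⟩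
    · -- symmetry of K, uses the realizability equation
      have h' := congrArg (fun X => T * X * T) h
      simp only [Matrix.mul_add, Matrix.add_mul, Matrix.mul_zero, Matrix.zero_mul] at h'
      rw [show T * (A * Θ) * T = T * A * (Θ * T) from by simp [Matrix.mul_assoc],
          show T * (Θ * Aᵀ) * T = (T * Θ) * (Aᵀ * T) from by simp [Matrix.mul_assoc],
          h1, h2, Matrix.mul_one, Matrix.one_mul] at h'
      have hz : T * A + Aᵀ * T + T * (B * (J * (Bᵀ * T))) = 0 := by
        simpa [Matrix.mul_assoc] using h'
      have hY : Aᵀ * T = -(T * A) - T * (B * (J * (Bᵀ * T))) := by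
        linear_combination (norm := abel) hz
      simp only [Matrix.transpose_sub, Matrix.transpose_neg, Matrix.transpose_smul,
        Matrix.transpose_mul, Matrix.transpose_transpose, hTt, hJt, hMt, Matrix.smul_mul,
        Matrix.mul_smul, smul_smul, Matrix.mul_neg, Matrix.neg_mul, smul_neg, neg_neg,
        Matrix.mul_assoc, hY]
      module
    · simp only [hMt, Matrix.transpose_transpose, sub_add_cancel, Matrix.mul_smul,
        smul_smul]
      rw [show Θ * (T * A) = (Θ * T) * A from by simp [Matrix.mul_assoc], h1]
      norm_num
    · simp only [hMt, Matrix.transpose_transpose, Matrix.mul_smul, smul_smul]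
      rw [show Θ * (T * B) = (Θ * T) * B from by simp [Matrix.mul_assoc], h1]
      norm_num
  · rintro ⟨K, M, hK, hA, hB⟩
    subst hA hB
    simp only [Matrix.transpose_add, Matrix.transpose_neg, Matrix.transpose_smul,
      Matrix.transpose_mul, Matrix.transpose_transpose, hΘanti, hJt, hK, Matrix.smul_mul,
      Matrix.mul_smul, smul_smul, Matrix.mul_neg, Matrix.neg_mul, smul_neg, neg_neg,
      Matrix.mul_add, Matrix.add_mul, smul_add, Matrix.mul_assoc]
    module
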